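/- Partitions λ and μ of n are adjacent in the partition graph G_n if and only if, after padding with trailing zeros, Σ_i |λ'_i − μ'_i| = 2, where λ' and μ' are the conjugate partitions. -/

import Mathlib

/-- The `i`-th entry (0-indexed) of the conjugate partition:
the number of parts of `P` that are `> i`, i.e. `≥ i+1`. -/
def conjFn {n : ℕ} (P : Nat.Partition n) : ℕ → ℕ :=
  fun i => Multiset.countP (fun p => i < p) P.parts

/-- L¹ distance between two (eventually zero) sequences of naturals. -/
noncomputable def l1 (a b : ℕ → ℕ) : ℕ := ∑' i, Nat.dist (a i) (b i)

/-- `Transfer P Q` : `Q` is obtained from `P` by decreasing one part `a` by one and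
increasing another part `b` (possibly a new part of size `0`) by one, followed by
reordering (automatic for multisets) and deletion of zero parts. -/
def Transfer {n : ℕ} (P Q : Nat.Partition n) : Prop :=
  ∃ a b : ℕ, a ∈ P.parts ∧ (b ∈ P.parts.erase a ∨ b = 0) ∧
    Q.parts = Multiset.filter (fun x => 0 < x)
      ((a - 1) ::ₘ (b + 1) ::ₘ ((P.parts.erase a).erase b))

/-- The partition graph `G n`: vertices are partitions of `n`, adjacency is a single
elementary unit transfer between parts (symmetrized, loops removed). -/
def G (n : ℕ) : SimpleGraph (Nat.Partition n) :=
  SimpleGraph.fromRel (fun P Q => Transfer P Q)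

/-- The multiset of parts of the conjugate partition of `P`. -/
def conjParts {n : ℕ} (P : Nat.Partition n) : Multiset ℕ :=
  ((Multiset.range n).map (conjFn P)).filter (fun x => 0 < x)

/-- `Q` is the conjugate partition of `P`. -/
def IsConjugate {n : ℕ} (P Q : Nat.Partition n) : Prop :=
  Q.parts = conjParts P

/-- The Ferrers translation `T_τ`, characterized by `(T_τ P)' = P' + τ'`
(see `conjFn_Tmap`). -/
def Tmap {n k : ℕ} (τ : Nat.Partition k) (P : Nat.Partition n) : Nat.Partition (n + k) where
  parts := P.parts + τ.parts
  parts_pos := fun hx => by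
    rcases Multiset.mem_add.mp hx with h | h
    · exact P.parts_pos h
    · exact τ.parts_pos h
  parts_sum := by rw [Multiset.sum_add, P.parts_sum, τ.parts_sum]

/-- `Tmap` realizes the defining property `(T_τ λ)' = λ' + τ'`. -/
theorem conjFn_Tmap {n k : ℕ} (τ : Nat.Partition k) (P : Nat.Partition n) :
    conjFn (Tmap τ P) = fun i => conjFn P i + conjFn τ i := by
  funext i
  simp [conjFn, Tmap, Multiset.countP_add]

/-- Maximum size of a clique containing the vertex `v`. -/
noncomputable def omegaLoc {V : Type*} (G : SimpleGraph V) (v : V) : ℕ :=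
  sSup {m | ∃ s : Finset V, G.IsNClique m s ∧ v ∈ s}

lemma countP_lt_split (s : Multiset ℕ) (v : ℕ) :
    s.countP (fun p => v < p) = s.countP (fun p => v + 1 < p) + s.count (v+1) := by
  induction s using Multiset.induction with
  | empty => simp
  | cons a s ih =>
    simp only [Multiset.countP_cons, Multiset.count_cons, ih]
    split_ifs <;> omega

lemma conjFn_succ {n : ℕ} (P : Nat.Partition n) (k : ℕ) :
    conjFn P k = conjFn P (k+1) + P.parts.count (k+1) := countP_lt_split _ k

lemma conjFn_eq_zero {n : ℕ} (P : Nat.Partition n) {k : ℕ} (h : n ≤ k) : conjFn P k = 0 := by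
  rw [conjFn]
  rw [Multiset.countP_eq_zero]
  intro p hp
  have h2 : p ≤ n := by
    have := Multiset.le_sum_of_mem hp
    rwa [P.parts_sum] at this
  omega

lemma sum_ite_lt (N a : ℕ) (h : a ≤ N) :
    ∑ k ∈ Finset.range N, (if k < a then (1:ℕ) else 0) = a := by
  induction N with
  | zero => simp; omega
  | succ N ih =>
    rw [Finset.sum_range_succ]
    rcases Nat.lt_or_ge a (N+1) with h' | h'
    · rw [ih (by omega)]
      split_ifs <;> omega
    · have ha : a = N + 1 := by omega
      subst ha
      have : ∑ k ∈ Finset.range N, (if k < N + 1 then (1:ℕ) else 0) = ∑ k ∈ Finset.range N, 1 := by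
        apply Finset.sum_congr rfl
        intro x hx
        simp [Finset.mem_range] at hx
        simp [hx.trans (Nat.lt_succ_self N)]
      rw [this]; simp

lemma sum_countP (s : Multiset ℕ) (N : ℕ) (h : ∀ p ∈ s, p ≤ N) :
    ∑ k ∈ Finset.range N, s.countP (fun p => k < p) = s.sum := by
  induction s using Multiset.induction with
  | empty => simp
  | cons a s ih =>
    simp only [Multiset.countP_cons, Multiset.sum_cons]
    rw [Finset.sum_add_distrib, ih (fun p hp => h p (Multiset.mem_cons_of_mem hp)),
      sum_ite_lt N a (h a (Multiset.mem_cons_self a s))]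
    omega

lemma conjFn_sum {n : ℕ} (P : Nat.Partition n) :
    ∑ k ∈ Finset.range n, conjFn P k = n := by
  have := sum_countP P.parts n (fun p hp => by
    have := Multiset.le_sum_of_mem hp; rwa [P.parts_sum] at this)
  rw [P.parts_sum] at this
  exact this

lemma multiset_eq_of_countP (s t : Multiset ℕ) (hs : ∀ x ∈ s, 0 < x) (ht : ∀ x ∈ t, 0 < x)
    (h : ∀ k, s.countP (fun p => k < p) = t.countP (fun p => k < p)) : s = t := by
  ext v
  cases v with
  | zero =>
    rw [Multiset.count_eq_zero_of_notMem (fun hm => by simpa using hs 0 hm),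
      Multiset.count_eq_zero_of_notMem (fun hm => by simpa using ht 0 hm)]
  | succ v =>
    have h1 := countP_lt_split s v
    have h2 := countP_lt_split t v
    rw [h v, h (v+1)] at h1
    omega

lemma partition_ext {n : ℕ} (P Q : Nat.Partition n) (h : ∀ k, conjFn P k = conjFn Q k) :
    P = Q := by
  apply Nat.Partition.ext
  exact multiset_eq_of_countP _ _ (fun x hx => P.parts_pos hx) (fun x hx => Q.parts_pos hx) h

lemma countP_transfer (s : Multiset ℕ) (hpos : ∀ x ∈ s, 0 < x) (a b : ℕ)
    (ha : a ∈ s) (hb : b ∈ s.erase a ∨ b = 0) (k : ℕ) :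
    (Multiset.filter (fun x => 0 < x)
        ((a-1) ::ₘ (b+1) ::ₘ ((s.erase a).erase b))).countP (fun p => k < p)
      + (if k = a - 1 then 1 else 0)
    = s.countP (fun p => k < p) + (if k = b then 1 else 0) := by
  have ha1 : 1 ≤ a := hpos a ha
  set S := (s.erase a).erase b with hS
  have hlam : s.countP (fun p => k < p)
      = S.countP (fun p => k < p) + (if k < a then 1 else 0) + (if k < b then 1 else 0) := by
    rcases hb with hb | hb
    · have h1 : s = a ::ₘ s.erase a := (Multiset.cons_erase ha).symm
      have h2 : s.erase a = b ::ₘ S := (Multiset.cons_erase hb).symm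
      conv_lhs => rw [h1, h2]
      rw [Multiset.countP_cons, Multiset.countP_cons]
      omega
    · subst hb
      have h0 : S = s.erase a := by
        rw [hS, Multiset.erase_of_notMem]
        intro h0
        exact absurd (hpos 0 (Multiset.mem_of_mem_erase h0)) (by simp)
      have h1 : s = a ::ₘ s.erase a := (Multiset.cons_erase ha).symm
      conv_lhs => rw [h1]
      rw [Multiset.countP_cons, h0]
      split_ifs <;> omega
  have hmu : (Multiset.filter (fun x => 0 < x)
        ((a-1) ::ₘ (b+1) ::ₘ S)).countP (fun p => k < p)
      = S.countP (fun p => k < p) + (if k < a - 1 then 1 else 0) + (if k < b + 1 then 1 else 0) := by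
    rw [Multiset.countP_filter]
    rw [Multiset.countP_cons, Multiset.countP_cons]
    have : S.countP (fun p => k < p ∧ 0 < p) = S.countP (fun p => k < p) := by
      apply Multiset.countP_congr rfl
      intro x _
      simp only [eq_iff_iff]
      omega
    rw [this]
    split_ifs <;> omega
  rw [hlam, hmu]
  split_ifs <;> omega

lemma l1_eq {n : ℕ} (lam mu : Nat.Partition n) :
    l1 (conjFn lam) (conjFn mu)
      = ∑ k ∈ Finset.range n, Nat.dist (conjFn lam k) (conjFn mu k) := by
  apply tsum_eq_sum
  intro k hk
  rw [Finset.mem_range, not_lt] at hk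
  rw [conjFn_eq_zero lam hk, conjFn_eq_zero mu hk]; rfl

lemma l1_comm (a b : ℕ → ℕ) : l1 a b = l1 b a := by
  unfold l1
  exact tsum_congr fun i => Nat.dist_comm _ _

lemma part_lt {n : ℕ} (lam : Nat.Partition n) {a b : ℕ} (ha : a ∈ lam.parts)
    (hb : b ∈ lam.parts.erase a ∨ b = 0) : a - 1 < n ∧ b < n := by
  have ha1 : 1 ≤ a := lam.parts_pos ha
  have han : a ≤ n := by
    have := Multiset.le_sum_of_mem ha; rwa [lam.parts_sum] at this
  rcases hb with hb | hb
  · have h1 : lam.parts = a ::ₘ lam.parts.erase a := (Multiset.cons_erase ha).symm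
    have h2 : b ≤ (lam.parts.erase a).sum := Multiset.le_sum_of_mem hb
    have h3 : lam.parts.sum = a + (lam.parts.erase a).sum := by
      conv_lhs => rw [h1]
      simp
    rw [lam.parts_sum] at h3
    omega
  · omega

lemma transfer_key {n : ℕ} {lam mu : Nat.Partition n} {a b : ℕ}
    (ha : a ∈ lam.parts) (hb : b ∈ lam.parts.erase a ∨ b = 0)
    (hQ : mu.parts = Multiset.filter (fun x => 0 < x)
      ((a - 1) ::ₘ (b + 1) ::ₘ ((lam.parts.erase a).erase b))) (k : ℕ) :
    conjFn mu k + (if k = a - 1 then 1 else 0) = conjFn lam k + (if k = b then 1 else 0) := by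
  have := countP_transfer lam.parts (fun x hx => lam.parts_pos hx) a b ha hb k
  rw [conjFn, conjFn, hQ]
  exact this

lemma l1_of_transfer {n : ℕ} {lam mu : Nat.Partition n} (hne : lam ≠ mu)
    (h : Transfer lam mu) : l1 (conjFn lam) (conjFn mu) = 2 := by
  obtain ⟨a, b, ha, hb, hQ⟩ := h
  have key := transfer_key ha hb hQ
  have hane : a - 1 ≠ b := by
    intro hab
    apply hne
    apply partition_ext
    intro k
    have := key k
    split_ifs at this <;> omega
  obtain ⟨han, hbn⟩ := part_lt lam ha hb
  rw [l1_eq]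
  have hd : ∀ k, Nat.dist (conjFn lam k) (conjFn mu k)
      = (if k = a - 1 then 1 else 0) + (if k = b then 1 else 0) := by
    intro k
    have := key k
    have hdist : Nat.dist (conjFn lam k) (conjFn mu k)
        = (conjFn lam k - conjFn mu k) + (conjFn mu k - conjFn lam k) := rfl
    split_ifs at this ⊢ <;> omega
  calc ∑ k ∈ Finset.range n, Nat.dist (conjFn lam k) (conjFn mu k)
      = ∑ k ∈ Finset.range n, ((if k = a - 1 then 1 else 0) + (if k = b then 1 else 0)) :=
        Finset.sum_congr rfl (fun k _ => hd k)
    _ = 2 := by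
        rw [Finset.sum_add_distrib, Finset.sum_ite_eq' _ (a-1) (fun _ => 1),
          Finset.sum_ite_eq' _ b (fun _ => 1)]
        simp [Finset.mem_range, han, hbn]

lemma transfer_of_l1 {n : ℕ} {lam mu : Nat.Partition n}
    (h : l1 (conjFn lam) (conjFn mu) = 2) : Transfer lam mu ∧ lam ≠ mu := by
  set f := conjFn lam with hf
  set g := conjFn mu with hg
  have hd : ∑ k ∈ Finset.range n, Nat.dist (f k) (g k) = 2 := by
    rw [← l1_eq]; exact h
  have hfs : ∑ k ∈ Finset.range n, f k = n := conjFn_sum lam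
  have hgs : ∑ k ∈ Finset.range n, g k = n := conjFn_sum mu
  have hdist : ∀ x y : ℕ, Nat.dist x y = (x - y) + (y - x) := fun _ _ => rfl
  have hi : ∃ i ∈ Finset.range n, g i < f i := by
    by_contra hc
    push_neg at hc
    have heq := (Finset.sum_eq_sum_iff_of_le hc).mp (hfs.trans hgs.symm)
    have : ∑ k ∈ Finset.range n, Nat.dist (f k) (g k) = 0 := by
      apply Finset.sum_eq_zero
      intro k hk; rw [hdist, heq k hk]; omega
    omega
  have hj : ∃ j ∈ Finset.range n, f j < g j := by
    by_contra hc
    push_neg at hc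
    have heq := (Finset.sum_eq_sum_iff_of_le hc).mp (hgs.trans hfs.symm)
    have : ∑ k ∈ Finset.range n, Nat.dist (f k) (g k) = 0 := by
      apply Finset.sum_eq_zero
      intro k hk; rw [hdist, heq k hk]; omega
    omega
  obtain ⟨i, hin, hilt⟩ := hi
  obtain ⟨j, hjn, hjlt⟩ := hj
  have hij : i ≠ j := by intro he; rw [he] at hilt; omega
  have hjmem : j ∈ (Finset.range n).erase i := Finset.mem_erase.mpr ⟨hij.symm, hjn⟩
  have hsum1 : Nat.dist (f i) (g i)
      + ∑ k ∈ (Finset.range n).erase i, Nat.dist (f k) (g k) = 2 := by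
    rw [← hd]; exact Finset.add_sum_erase _ (fun k => Nat.dist (f k) (g k)) hin
  have hsum2 : Nat.dist (f j) (g j)
      + ∑ k ∈ ((Finset.range n).erase i).erase j, Nat.dist (f k) (g k)
      = ∑ k ∈ (Finset.range n).erase i, Nat.dist (f k) (g k) :=
    Finset.add_sum_erase _ (fun k => Nat.dist (f k) (g k)) hjmem
  have hdi : 1 ≤ Nat.dist (f i) (g i) := by rw [hdist]; omega
  have hdj : 1 ≤ Nat.dist (f j) (g j) := by rw [hdist]; omega
  have hrest : ∑ k ∈ ((Finset.range n).erase i).erase j, Nat.dist (f k) (g k) = 0 := by omega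
  have hfi : f i = g i + 1 := by
    have h1 : Nat.dist (f i) (g i) = 1 := by omega
    rw [hdist] at h1; omega
  have hgj : g j = f j + 1 := by
    have h1 : Nat.dist (f j) (g j) = 1 := by omega
    rw [hdist] at h1; omega
  have hfg : ∀ k, k ≠ i → k ≠ j → f k = g k := by
    intro k hki hkj
    by_cases hkn : k < n
    · have hkmem : k ∈ ((Finset.range n).erase i).erase j :=
        Finset.mem_erase.mpr ⟨hkj, Finset.mem_erase.mpr ⟨hki, Finset.mem_range.mpr hkn⟩⟩
      have := (Finset.sum_eq_zero_iff.mp hrest) k hkmem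
      rw [hdist] at this; omega
    · rw [hf, hg, conjFn_eq_zero lam (by omega), conjFn_eq_zero mu (by omega)]
  have hfmono : ∀ k, f (k+1) ≤ f k := fun k => by
    have := conjFn_succ lam k; rw [← hf] at this; omega
  have hgmono : ∀ k, g (k+1) ≤ g k := fun k => by
    have := conjFn_succ mu k; rw [← hg] at this; omega
  -- a = i+1 is a part of lam
  have hfi1 : f (i+1) < f i := by
    by_cases hj1 : i + 1 = j
    · have h1 := hgmono i
      have h2 : g (i+1) = f (i+1) + 1 := by rw [hj1]; exact hgj
      omega
    · have h1 := hfg (i+1) (by omega) hj1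
      have h2 := hgmono i
      omega
  have hcnti : f i = f (i+1) + lam.parts.count (i+1) := by
    have := conjFn_succ lam i; rw [← hf] at this; exact this
  have ha : (i+1) ∈ lam.parts := by
    rw [← Multiset.count_pos]; omega
  -- b = j
  have hbmem : j ∈ lam.parts.erase (i+1) ∨ j = 0 := by
    rcases Nat.eq_zero_or_pos j with hj0 | hj0
    · exact Or.inr hj0
    · left
      have hcntj : f (j-1) = f j + lam.parts.count j := by
        have := conjFn_succ lam (j-1); rw [← hf] at this
        have hj1 : j - 1 + 1 = j := by omega
        rwa [hj1] at this
      have hgm : g (j-1) ≥ g j := by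
        have := hgmono (j-1)
        have hj1 : j - 1 + 1 = j := by omega
        rwa [hj1] at this
      by_cases hji : j = i + 1
      · -- need count ≥ 2
        have e1 : f (i+1) + 1 = g (i+1) := by rw [← hji]; omega
        have e2 : g (i+1) ≤ g i := hgmono i
        have hc2 : 2 ≤ lam.parts.count (i+1) := by omega
        rw [← Multiset.count_pos, hji, Multiset.count_erase_self]
        omega
      · rw [← Multiset.count_pos, Multiset.count_erase_of_ne hji]
        by_cases hji2 : j - 1 = i
        · have h2 : f (j-1) = g (j-1) + 1 := by rw [hji2]; exact hfi
          omega
        · have h2 : f (j-1) = g (j-1) := hfg (j-1) hji2 (by omega)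
          omega
  -- the resulting multiset equals mu.parts
  have hM : ∀ k, (Multiset.filter (fun x => 0 < x)
      (i ::ₘ (j + 1) ::ₘ ((lam.parts.erase (i+1)).erase j))).countP
        (fun p => k < p) = g k := by
    intro k
    have hkey := countP_transfer lam.parts (fun x hx => lam.parts_pos hx) (i+1) j ha hbmem k
    have hfk : lam.parts.countP (fun p => k < p) = f k := rfl
    rw [hfk] at hkey
    have hii : i + 1 - 1 = i := rfl
    rw [hii] at hkey
    by_cases hki : k = i
    · rw [if_pos hki, if_neg (by omega : ¬ k = j)] at hkey
      have h2 : f k = g k + 1 := by rw [hki]; exact hfi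
      omega
    · by_cases hkj : k = j
      · rw [if_neg hki, if_pos hkj] at hkey
        have h2 : g k = f k + 1 := by rw [hkj]; exact hgj
        omega
      · rw [if_neg hki, if_neg hkj] at hkey
        have h2 := hfg k hki hkj
        omega
  have hQ : mu.parts = Multiset.filter (fun x => 0 < x)
      (i ::ₘ (j + 1) ::ₘ ((lam.parts.erase (i+1)).erase j)) :=
    multiset_eq_of_countP _ _ (fun x hx => mu.parts_pos hx)
      (fun x hx => (Multiset.mem_filter.mp hx).2)
      (fun k => (hM k).symm)
  refine ⟨⟨i+1, j, ha, hbmem, hQ⟩, ?_⟩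
  intro he
  rw [hf, hg, he] at hfi
  omega

/-- adjacency in `G n` is equivalent to the conjugates being at
L¹ distance `2` (after padding with trailing zeros). -/
theorem stmt3 (n : ℕ) (lam mu : Nat.Partition n) :
    (G n).Adj lam mu ↔ l1 (conjFn lam) (conjFn mu) = 2 := by
  rw [G, SimpleGraph.fromRel_adj]
  constructor
  · rintro ⟨hne, h | h⟩
    · exact l1_of_transfer hne h
    · rw [l1_comm]; exact l1_of_transfer hne.symm h
  · intro h
    obtain ⟨ht, hne⟩ := transfer_of_l1 h
    exact ⟨hne, Or.inl ht⟩
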